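/- Let a, c ∈ ℝ and set μ = 0 and b = −a² − a c (so that a² + a c + b = 0). Then the parabola {(x, z) ∈ ℝ² : z = a x²} is invariant under the desingularized slow flow x' = z − x, z' = −2x(μ + a x + b x² + c z): for every differentiable solution (x, z) : J → ℝ² of this system on an interval J with z(t₀) = a x(t₀)² at some t₀ ∈ J, one has z(t) = a x(t)² for all t ∈ J. -/

import Mathlib

open Set Real

/-- Gronwall-type uniqueness for a scalar linear ODE `w' = k t * w` on an
interval: if `w` vanishes at one point, it vanishes everywhere. -/
lemma linear_ode_zero (k w : ℝ → ℝ) (J : Set ℝ) (hJ : J.OrdConnected)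
    (hk : ContinuousOn k J)
    (hw : ∀ t ∈ J, HasDerivWithinAt w (k t * w t) J t)
    (t₀ : ℝ) (ht₀ : t₀ ∈ J) (h0 : w t₀ = 0) :
    ∀ t ∈ J, w t = 0 := by
  intro t ht
  rcases le_total t₀ t with hle | hle
  · -- forward in time on Icc t₀ t
    have hsub : Icc t₀ t ⊆ J := hJ.out ht₀ ht
    obtain ⟨C, hC⟩ := (isCompact_Icc).exists_bound_of_continuousOn (hk.mono hsub)
    set C' : ℝ := max C 0 with hC'
    have hC0 : 0 ≤ C' := le_max_right _ _
    have hCb : ∀ s ∈ Icc t₀ t, ‖k s‖ ≤ C' := fun s hs => (hC s hs).trans (le_max_left _ _)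
    set v : ℝ → ℝ → ℝ := fun s y => if s ∈ Icc t₀ t then k s * y else 0 with hv
    have hlip : ∀ s, LipschitzOnWith C'.toNNReal (v s) univ := by
      intro s
      apply LipschitzOnWith.of_dist_le_mul
      intro y _ y' _
      simp only [hv]
      split_ifs with hs
      · rw [Real.coe_toNNReal _ hC0, Real.dist_eq, Real.dist_eq, ← mul_sub, abs_mul]
        exact mul_le_mul_of_nonneg_right (hCb s hs) (abs_nonneg _)
      · rw [Real.coe_toNNReal _ hC0]
        simpa using mul_nonneg hC0 dist_nonneg
    have key := ODE_solution_unique_of_mem_Icc_right (v := v) (s := fun _ => univ)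
      (f := w) (g := fun _ => 0) (K := C'.toNNReal) (a := t₀) (b := t)
      (fun s _ => hlip s)
      (fun s hs => ((hw s (hsub hs)).continuousWithinAt).mono hsub)
      (fun s hs => by
        have hmem : s ∈ Icc t₀ t := ⟨hs.1, hs.2.le⟩
        have h := ((hw s (hsub hmem)).mono hsub).mono_of_mem_nhdsWithin
          (Icc_mem_nhdsGE_of_mem hs)
        simp only [hv]
        rw [if_pos hmem]
        exact h)
      (fun _ _ => trivial)
      continuousOn_const
      (fun s hs => by
        simpa [hv] using (hasDerivWithinAt_const s (Ici s) (0:ℝ)))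
      (fun _ _ => trivial)
      (by simpa using h0)
    simpa using key (right_mem_Icc.mpr hle)
  · -- backward in time on Icc t t₀
    have hsub : Icc t t₀ ⊆ J := hJ.out ht ht₀
    obtain ⟨C, hC⟩ := (isCompact_Icc).exists_bound_of_continuousOn (hk.mono hsub)
    set C' : ℝ := max C 0 with hC'
    have hC0 : 0 ≤ C' := le_max_right _ _
    have hCb : ∀ s ∈ Icc t t₀, ‖k s‖ ≤ C' := fun s hs => (hC s hs).trans (le_max_left _ _)
    set v : ℝ → ℝ → ℝ := fun s y => if s ∈ Icc t t₀ then k s * y else 0 with hv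
    have hlip : ∀ s, LipschitzOnWith C'.toNNReal (v s) univ := by
      intro s
      apply LipschitzOnWith.of_dist_le_mul
      intro y _ y' _
      simp only [hv]
      split_ifs with hs
      · rw [Real.coe_toNNReal _ hC0, Real.dist_eq, Real.dist_eq, ← mul_sub, abs_mul]
        exact mul_le_mul_of_nonneg_right (hCb s hs) (abs_nonneg _)
      · rw [Real.coe_toNNReal _ hC0]
        simpa using mul_nonneg hC0 dist_nonneg
    have key := ODE_solution_unique_of_mem_Icc_left (v := v) (s := fun _ => univ)
      (f := w) (g := fun _ => 0) (K := C'.toNNReal) (a := t) (b := t₀)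
      (fun s _ => hlip s)
      (fun s hs => ((hw s (hsub hs)).continuousWithinAt).mono hsub)
      (fun s hs => by
        have hmem : s ∈ Icc t t₀ := ⟨hs.1.le, hs.2⟩
        have h := ((hw s (hsub hmem)).mono hsub).mono_of_mem_nhdsWithin
          (Icc_mem_nhdsLE_of_mem hs)
        simp only [hv]
        rw [if_pos hmem]
        exact h)
      (fun _ _ => trivial)
      continuousOn_const
      (fun s hs => by
        simpa [hv] using (hasDerivWithinAt_const s (Iic s) (0:ℝ)))
      (fun _ _ => trivial)
      (by simpa using h0)
    simpa using key (left_mem_Icc.mpr hle)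

/-- For `μ = 0` and `b = −a² − ac` (i.e. `a² + ac + b = 0`),
the parabola `z = a x²` is invariant under the desingularized slow flow
`x' = z − x, z' = −2x(μ + a x + b x² + c z)`: any solution on an interval
touching the parabola stays on it. -/
theorem desingularized_slow_flow_invariant_parabola
    (a c : ℝ) (J : Set ℝ) (hJconn : J.OrdConnected)
    (x z : ℝ → ℝ)
    (hx : ∀ t ∈ J, HasDerivWithinAt x (z t - x t) J t)
    (hz : ∀ t ∈ J, HasDerivWithinAt z
      (-2 * x t * ((0 : ℝ) + a * x t + (-a ^ 2 - a * c) * (x t) ^ 2 + c * z t)) J t)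
    (t₀ : ℝ) (ht₀ : t₀ ∈ J) (hinit : z t₀ = a * (x t₀) ^ 2) :
    ∀ t ∈ J, z t = a * (x t) ^ 2 := by
  set w : ℝ → ℝ := fun t => z t - a * x t ^ 2 with hwdef
  set k : ℝ → ℝ := fun t => -2 * (a + c) * x t with hkdef
  have hkcont : ContinuousOn k J := by
    apply ContinuousOn.mul continuousOn_const
    exact fun t ht => ((hx t ht).continuousWithinAt)
  have hw : ∀ t ∈ J, HasDerivWithinAt w (k t * w t) J t := by
    intro t ht
    have h1 : HasDerivWithinAt (fun t => a * x t ^ 2)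
        (a * (2 * x t ^ 1 * (z t - x t))) J t := ((hx t ht).pow 2).const_mul a
    have h2 := (hz t ht).sub h1
    convert h2 using 1
    show (-2 * (a + c) * x t) * (z t - a * x t ^ 2) = _
    ring
    all_goals rfl
  have := linear_ode_zero k w J hJconn hkcont hw t₀ ht₀ (by simp [hwdef, hinit])
  intro t ht
  have h := this t ht
  simp only [hwdef] at h
  linarith
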